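/- Let α be a finite type with N elements, let k and n be integers with 1 ≤ k ≤ n ≤ N, and set t = ⌊n/k⌋. For each integer q ≥ 1 consider the process: sample C uniformly from the size-n subsets of α; then, independently for each j = 1, …, q, sample I_{j,1}, …, I_{j,t} uniformly and independently from the size-k subsets of Fin N, sample g_j uniformly from the set of injective functions from ⋃_{i=1}^t I_{j,i} to C, and set S_{j,i} = g_j '' I_{j,i}. Let H be a nonempty class of {0,1}-valued hypotheses f : Finset α → ℝ with finite VC dimension (with respect to size-k subsets of α). Then: E[ sup_{f ∈ H} | Q_k(Finset.univ, f) − Q_k(C, f) | ] ≤ limsup_{q → ∞} E[ sup_{f ∈ H} | Q_k(Finset.univ, f) − (1/(q·t)) · ∑_{j=1}^q ∑_{i=1}^t f(S_{j,i}) | ]. -/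

import Mathlib

open scoped ENNReal

/-- The average of `f` over all size-`k` subsets of `C`: the probability `Q_{Υ,k}(f)` that a
uniformly random size-`k` fragment of the relational example with domain `C` satisfies `f`. -/
noncomputable def Qk {α : Type*} [DecidableEq α] (k : ℕ) (C : Finset α) (f : Finset α → ℝ) : ℝ :=
  ((C.card.choose k : ℝ))⁻¹ * ∑ S ∈ C.powersetCard k, f S

/-- `H` shatters the collection `X` of size-`k` subsets of `α`: every `S ∈ X` has cardinality `k`,
and for every `Y ⊆ X` there is `f ∈ H` taking value `1` on `Y` and `0` on `X \ Y`. -/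
def Shatters {α : Type*} [DecidableEq α] (k : ℕ)
    (H : Set (Finset α → ℝ)) (X : Finset (Finset α)) : Prop :=
  (∀ S ∈ X, S.card = k) ∧
    ∀ Y ⊆ X, ∃ f ∈ H, (∀ S ∈ Y, f S = 1) ∧ ∀ S ∈ X \ Y, f S = 0

/-- The VC dimension of `H` with respect to size-`k` subsets of `α` equals `d`: `d` is the largest
cardinality of a collection of size-`k` subsets shattered by `H`. -/
def VCDimEq {α : Type*} [DecidableEq α] (k : ℕ) (H : Set (Finset α → ℝ)) (d : ℕ) : Prop :=
  IsGreatest {m : ℕ | ∃ X : Finset (Finset α), Shatters k H X ∧ X.card = m} d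

/-- The sampling process of Lemma 1 of the paper (with `q` repetitions), as a `PMF` built with the
`PMF` monad from uniform distributions: sample a size-`n` subset `C` of `α` uniformly; then,
independently for each `j`, sample size-`k` subsets `I_{j,1}, …, I_{j,t}` of `Fin (card α)`
uniformly and independently, sample an injective function `g_j` from `⋃ᵢ I_{j,i}` to `C`
uniformly, and set `S_{j,i} = g_j '' I_{j,i}`. The output is the pair `(C, S)`. -/
noncomputable def sampleProcQ (α : Type*) [Fintype α] [DecidableEq α] (k n t q : ℕ)
    (hkn : k ≤ n) (hn : n ≤ Fintype.card α) (ht : t * k ≤ n) :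
    PMF (Finset α × (Fin q → Fin t → Finset α)) :=
  haveI hC : Nonempty {C : Finset α // C.card = n} := by
    obtain ⟨s, -, hs⟩ := Finset.exists_subset_card_eq
      (show n ≤ (Finset.univ : Finset α).card by simpa using hn)
    exact ⟨⟨s, hs⟩⟩
  haveI hI : Nonempty {I : Finset (Fin (Fintype.card α)) // I.card = k} := by
    obtain ⟨s, -, hs⟩ := Finset.exists_subset_card_eq
      (show k ≤ (Finset.univ : Finset (Fin (Fintype.card α))).card by
        simpa using (hkn.trans hn))
    exact ⟨⟨s, hs⟩⟩
  (PMF.uniformOfFintype {C : Finset α // C.card = n}).bind fun C =>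
    (PMF.uniformOfFintype
        (Fin q → Fin t → {I : Finset (Fin (Fintype.card α)) // I.card = k})).bind fun I =>
      haveI : ∀ j : Fin q,
          Nonempty {g : ↥(Finset.univ.biUnion fun i => (I j i).1) → α //
            Function.Injective g ∧ ∀ x, g x ∈ C.1} := by
        intro j
        have hU : (Finset.univ.biUnion fun i => (I j i).1).card ≤ n := by
          refine le_trans Finset.card_biUnion_le ?_
          calc ∑ i : Fin t, (I j i).1.card = ∑ _i : Fin t, k :=
                Finset.sum_congr rfl fun i _ => (I j i).2
            _ = t * k := by simp [Finset.sum_const, mul_comm]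
            _ ≤ n := ht
        have hcard :
            Fintype.card ↥(Finset.univ.biUnion fun i => (I j i).1) ≤
              Fintype.card ↥C.1 := by
          rw [Fintype.card_coe, Fintype.card_coe]
          exact hU.trans_eq C.2.symm
        obtain ⟨e⟩ := Function.Embedding.nonempty_of_card_le hcard
        exact ⟨⟨fun x => (e x).1, fun a b hab => e.injective (Subtype.ext hab),
          fun x => (e x).2⟩⟩
      (PMF.uniformOfFintype
          ((j : Fin q) → {g : ↥(Finset.univ.biUnion fun i => (I j i).1) → α //
            Function.Injective g ∧ ∀ x, g x ∈ C.1})).map fun g =>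
        (C.1, fun j i =>
          (I j i).1.attach.image fun x =>
            (g j).1 ⟨x.1, Finset.mem_biUnion.mpr ⟨i, Finset.mem_univ i, x.2⟩⟩)

/-! ### Auxiliary expectation machinery -/

noncomputable def pexp {γ : Type*} (p : PMF γ) (F : γ → ℝ) : ℝ := ∑' x, (p x).toReal * F x

lemma pexp_eq_sum {γ : Type*} [Fintype γ] (p : PMF γ) (F : γ → ℝ) :
    pexp p F = ∑ x, (p x).toReal * F x := tsum_fintype _

lemma sum_toReal_pmf {γ : Type*} [Fintype γ] (p : PMF γ) : ∑ x, (p x).toReal = 1 := by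
  have h := p.tsum_coe
  rw [tsum_fintype] at h
  rw [← ENNReal.toReal_sum (fun a _ => p.apply_ne_top a), h, ENNReal.toReal_one]

lemma pexp_bind {β γ : Type*} [Fintype β] [Fintype γ] (p : PMF β) (f : β → PMF γ) (F : γ → ℝ) :
    pexp (p.bind f) F = ∑ a, (p a).toReal * pexp (f a) F := by
  simp only [pexp_eq_sum, PMF.bind_apply]
  have h : ∀ x, ((∑' a, p a * f a x).toReal : ℝ) = ∑ a, (p a).toReal * (f a x).toReal := by
    intro x
    rw [tsum_fintype, ENNReal.toReal_sum (fun a _ =>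
      ENNReal.mul_ne_top (p.apply_ne_top a) ((f a).apply_ne_top x))]
    simp [ENNReal.toReal_mul]
  simp only [h, Finset.sum_mul]
  rw [Finset.sum_comm]
  refine Finset.sum_congr rfl fun a _ => ?_
  rw [Finset.mul_sum]
  exact Finset.sum_congr rfl fun x _ => by ring

lemma pexp_pure {γ : Type*} [Fintype γ] [DecidableEq γ] (b : γ) (F : γ → ℝ) :
    pexp (PMF.pure b) F = F b := by
  simp only [pexp_eq_sum, PMF.pure_apply]
  rw [Finset.sum_eq_single b] <;> simp +contextual

lemma pexp_map {β γ : Type*} [Fintype β] [Fintype γ] [DecidableEq γ] (p : PMF β) (m : β → γ)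
    (F : γ → ℝ) : pexp (p.map m) F = ∑ a, (p a).toReal * F (m a) := by
  rw [show p.map m = p.bind (fun a => PMF.pure (m a)) from rfl, pexp_bind]
  simp [pexp_pure]

lemma toReal_uniform {β : Type*} [Fintype β] [Nonempty β] (b : β) :
    ((PMF.uniformOfFintype β) b).toReal = (Fintype.card β : ℝ)⁻¹ := by
  simp [PMF.uniformOfFintype_apply, ENNReal.toReal_inv]

lemma avg_pi_eval {ι : Type*} [Fintype ι] [DecidableEq ι] (G : ι → Type*) [∀ j, Fintype (G j)]
    [∀ j, Nonempty (G j)] (j0 : ι) (h : G j0 → ℝ) :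
    (Fintype.card (∀ j, G j) : ℝ)⁻¹ * ∑ g : ∀ j, G j, h (g j0)
      = (Fintype.card (G j0) : ℝ)⁻¹ * ∑ g0, h g0 := by
  have he : ∑ g : ∀ j, G j, h (g j0)
      = ∑ p : G j0 × (∀ j : {j // j ≠ j0}, G j.1), h p.1 :=
    Fintype.sum_equiv (Equiv.piSplitAt j0 G) _ _ (fun g => rfl)
  rw [he, Fintype.sum_prod_type, Fintype.card_congr (Equiv.piSplitAt j0 G), Fintype.card_prod]
  simp only [Finset.sum_const, Finset.card_univ, nsmul_eq_mul]
  have h1 : (Fintype.card (G j0) : ℝ) ≠ 0 := Nat.cast_ne_zero.mpr Fintype.card_ne_zero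
  have h2 : (Fintype.card (∀ j : {j // j ≠ j0}, G j.1) : ℝ) ≠ 0 :=
    Nat.cast_ne_zero.mpr Fintype.card_ne_zero
  rw [← Finset.mul_sum]
  push_cast
  field_simp

lemma abs_avg_le {ι : Type*} (s : Finset ι) (w v B : ι → ℝ) (hw : ∀ i ∈ s, 0 ≤ w i)
    (hvB : ∀ i ∈ s, |v i| ≤ B i) : |∑ i ∈ s, w i * v i| ≤ ∑ i ∈ s, w i * B i :=
  (Finset.abs_sum_le_sum_abs _ _).trans (Finset.sum_le_sum fun i hi => by
    rw [abs_mul, abs_of_nonneg (hw i hi)]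
    exact mul_le_mul_of_nonneg_left (hvB i hi) (hw i hi))

/-! ### The key combinatorial lemma -/

lemma avg_inj_image {β α : Type*} [Fintype β] [DecidableEq β] [Fintype α] [DecidableEq α]
    (k : ℕ) (U J : Finset β) (hJU : J ⊆ U) (hJk : J.card = k)
    (C : Finset α) (hkC : k ≤ C.card)
    (hne : Nonempty {g : ↥U → α // Function.Injective g ∧ ∀ x, g x ∈ C})
    (f : Finset α → ℝ) :
    (Fintype.card {g : ↥U → α // Function.Injective g ∧ ∀ x, g x ∈ C} : ℝ)⁻¹ *
      ∑ g : {g : ↥U → α // Function.Injective g ∧ ∀ x, g x ∈ C},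
        f (J.attach.image fun x => g.1 ⟨x.1, hJU x.2⟩) = Qk k C f := by
  set G := {g : ↥U → α // Function.Injective g ∧ ∀ x, g x ∈ C} with hGdef
  let img : G → Finset α := fun g => J.attach.image fun x => g.1 ⟨x.1, hJU x.2⟩
  have himg_card : ∀ g : G, (img g).card = k := by
    intro g
    rw [Finset.card_image_of_injOn, Finset.card_attach, hJk]
    intro x _ y _ hxy
    have h2 : (⟨x.1, hJU x.2⟩ : ↥U) = ⟨y.1, hJU y.2⟩ := g.2.1 hxy
    have h3 : (x.1 : β) = y.1 := Subtype.mk_eq_mk.mp h2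
    exact Subtype.ext h3
  have himg_mem : ∀ g : G, img g ∈ C.powersetCard k := by
    intro g
    rw [Finset.mem_powersetCard]
    refine ⟨fun a ha => ?_, himg_card g⟩
    simp only [img, Finset.mem_image] at ha
    obtain ⟨x, -, rfl⟩ := ha
    exact g.2.2 _
  have hpart : ∑ g : G, f (img g)
      = ∑ T ∈ C.powersetCard k,
          ((Finset.univ.filter fun g : G => img g = T).card : ℝ) * f T := by
    rw [← Finset.sum_fiberwise_of_maps_to (fun g (_ : g ∈ Finset.univ) => himg_mem g)
      (fun g => f (img g))]
    refine Finset.sum_congr rfl fun T hT => ?_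
    rw [Finset.sum_congr rfl (fun g hg => by rw [(Finset.mem_filter.mp hg).2]),
      Finset.sum_const, nsmul_eq_mul]
  -- counts are constant over T
  have key : ∀ (σ : Equiv.Perm ↥C) (S S' : Finset α),
      (∀ x : ↥C, (↑x : α) ∈ S → (↑(σ x) : α) ∈ S') → S'.card = k →
      (Finset.univ.filter fun g : G => img g = S).card
        ≤ (Finset.univ.filter fun g : G => img g = S').card := by
    intro σ S S' hσ hS'
    have hΦprop : ∀ g : G, Function.Injective (fun x => (↑(σ ⟨g.1 x, g.2.2 x⟩) : α)) ∧
        ∀ x, (↑(σ ⟨g.1 x, g.2.2 x⟩) : α) ∈ C := by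
      intro g
      refine ⟨fun a b hab => ?_, fun x => (σ ⟨g.1 x, g.2.2 x⟩).2⟩
      have h2 : (⟨g.1 a, g.2.2 a⟩ : ↥C) = ⟨g.1 b, g.2.2 b⟩ := σ.injective (Subtype.ext hab)
      have h3 : g.1 a = g.1 b := Subtype.mk_eq_mk.mp h2
      exact g.2.1 h3
    let Φ : G → G := fun g => ⟨fun x => ↑(σ ⟨g.1 x, g.2.2 x⟩), hΦprop g⟩
    have hmapsto : ∀ g : G, img g = S → img (Φ g) = S' := by
      intro g hg
      refine Finset.eq_of_subset_of_card_le (fun a ha => ?_) (by rw [himg_card (Φ g), hS'])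
      simp only [img, Φ, Finset.mem_image] at ha
      obtain ⟨x, -, rfl⟩ := ha
      refine hσ _ ?_
      rw [← hg]
      exact Finset.mem_image_of_mem _ (Finset.mem_attach _ _)
    refine Finset.card_le_card_of_injOn Φ (fun g hg => ?_) (fun g _ g' _ hgg' => ?_)
    · simp only [Finset.mem_coe, Finset.mem_filter, Finset.mem_univ, true_and] at hg ⊢
      exact hmapsto g hg
    · have h3 : ∀ x, (↑(σ ⟨g.1 x, g.2.2 x⟩) : α) = ↑(σ ⟨g'.1 x, g'.2.2 x⟩) :=
        fun x => congrFun (congrArg Subtype.val hgg') x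
      refine Subtype.ext (funext fun x => ?_)
      have h4 : (⟨g.1 x, g.2.2 x⟩ : ↥C) = ⟨g'.1 x, g'.2.2 x⟩ := σ.injective (Subtype.ext (h3 x))
      have h5 : g.1 x = g'.1 x := Subtype.mk_eq_mk.mp h4
      exact h5
  have hcount : ∀ T ∈ C.powersetCard k, ∀ T' ∈ C.powersetCard k,
      (Finset.univ.filter fun g : G => img g = T).card
        = (Finset.univ.filter fun g : G => img g = T').card := by
    intro T hT T' hT'
    rw [Finset.mem_powersetCard] at hT hT'
    have hcardsub : ∀ (S : Finset α), S ⊆ C → Fintype.card {x : ↥C // (↑x : α) ∈ S} = S.card := by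
      intro S hS
      rw [Fintype.card_congr (⟨fun x => (⟨x.1.1, x.2⟩ : ↥S), fun x => ⟨⟨x.1, hS x.2⟩, x.2⟩,
        fun x => by ext; rfl, fun x => by ext; rfl⟩ :
          {x : ↥C // (↑x : α) ∈ S} ≃ ↥S), Fintype.card_coe]
    let e : {x : ↥C // (↑x : α) ∈ T} ≃ {x : ↥C // (↑x : α) ∈ T'} :=
      Fintype.equivOfCardEq (by rw [hcardsub T hT.1, hcardsub T' hT'.1, hT.2, hT'.2])
    have hπ : ∀ x : ↥C, (↑x : α) ∈ T → (↑(e.extendSubtype x) : α) ∈ T' :=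
      fun x hx => e.extendSubtype_mem x hx
    have hπ' : ∀ x : ↥C, (↑x : α) ∈ T' → (↑(e.extendSubtype.symm x) : α) ∈ T := by
      intro x hx
      by_contra hmem
      have h2 := e.extendSubtype_not_mem _ hmem
      rw [Equiv.apply_symm_apply] at h2
      exact h2 hx
    exact le_antisymm (key e.extendSubtype T T' hπ hT'.2) (key e.extendSubtype.symm T' T hπ' hT.2)
  have htot : ∑ T ∈ C.powersetCard k, (Finset.univ.filter fun g : G => img g = T).card
      = Fintype.card G := by
    have h := Finset.sum_fiberwise_of_maps_to (fun (g : G) (_ : g ∈ Finset.univ) => himg_mem g)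
      (fun _ => (1 : ℕ))
    simp only [Finset.sum_const, smul_eq_mul, mul_one, Finset.card_univ] at h
    exact h
  obtain ⟨T₀, hT₀sub, hT₀⟩ := Finset.exists_subset_card_eq hkC
  have hT₀mem : T₀ ∈ C.powersetCard k := Finset.mem_powersetCard.mpr ⟨hT₀sub, hT₀⟩
  set c := (Finset.univ.filter fun g : G => img g = T₀).card with hc
  have htot2 : C.card.choose k * c = Fintype.card G := by
    rw [← htot, Finset.sum_congr rfl (fun T hT => hcount T hT T₀ hT₀mem), Finset.sum_const,
      smul_eq_mul, Finset.card_powersetCard]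
  have hm : (0:ℕ) < C.card.choose k := Nat.choose_pos hkC
  have hcne : c ≠ 0 := by
    intro h0
    have hpos := Fintype.card_pos (α := G)
    rw [h0, mul_zero] at htot2
    omega
  calc (Fintype.card G : ℝ)⁻¹ * ∑ g : G, f (img g)
      = (Fintype.card G : ℝ)⁻¹ * ∑ T ∈ C.powersetCard k, (c : ℝ) * f T := by
        rw [hpart]
        congr 1
        exact Finset.sum_congr rfl fun T hT => by rw [hcount T hT T₀ hT₀mem]
    _ = ((C.card.choose k : ℝ) * c)⁻¹ * ((c : ℝ) * ∑ T ∈ C.powersetCard k, f T) := by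
        rw [← Finset.mul_sum, ← htot2]
        push_cast
        ring
    _ = Qk k C f := by
        unfold Qk
        have h1 : (C.card.choose k : ℝ) ≠ 0 := Nat.cast_ne_zero.mpr hm.ne'
        have h2 : (c : ℝ) ≠ 0 := Nat.cast_ne_zero.mpr hcne
        field_simp

/-! ### Boundedness lemmas -/

lemma Qk_bounds {α : Type*} [DecidableEq α] (k : ℕ) (D : Finset α) (f : Finset α → ℝ)
    (hf : ∀ S, f S = 0 ∨ f S = 1) : 0 ≤ Qk k D f ∧ Qk k D f ≤ 1 := by
  have h0 : ∀ S ∈ D.powersetCard k, (0:ℝ) ≤ f S := fun S _ => by rcases hf S with h|h <;> simp [h]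
  have h1 : ∀ S ∈ D.powersetCard k, f S ≤ 1 := fun S _ => by rcases hf S with h|h <;> simp [h]
  unfold Qk
  constructor
  · exact mul_nonneg (inv_nonneg.mpr (Nat.cast_nonneg _)) (Finset.sum_nonneg h0)
  · calc ((D.card.choose k : ℝ))⁻¹ * ∑ S ∈ D.powersetCard k, f S
        ≤ ((D.card.choose k : ℝ))⁻¹ * ∑ _S ∈ D.powersetCard k, (1:ℝ) :=
          mul_le_mul_of_nonneg_left (Finset.sum_le_sum h1) (inv_nonneg.mpr (Nat.cast_nonneg _))
      _ = ((D.card.choose k : ℝ))⁻¹ * (D.card.choose k : ℝ) := by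
          rw [Finset.sum_const, Finset.card_powersetCard]; simp
      _ ≤ 1 := by
          rcases eq_or_ne ((D.card.choose k : ℝ)) 0 with h|h
          · simp [h]
          · rw [inv_mul_cancel₀ h]

lemma est_bounds {α : Type*} [DecidableEq α] {q t : ℕ} (f : Finset α → ℝ)
    (hf : ∀ S, f S = 0 ∨ f S = 1) (x : Fin q → Fin t → Finset α) :
    0 ≤ (1 / ((q * t : ℕ) : ℝ)) * ∑ j, ∑ i, f (x j i) ∧
      (1 / ((q * t : ℕ) : ℝ)) * ∑ j, ∑ i, f (x j i) ≤ 1 := by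
  have hc : (0:ℝ) ≤ 1 / ((q * t : ℕ) : ℝ) := by positivity
  have h0 : (0:ℝ) ≤ ∑ j, ∑ i, f (x j i) :=
    Finset.sum_nonneg fun j _ => Finset.sum_nonneg fun i _ => by
      rcases hf (x j i) with h|h <;> simp [h]
  refine ⟨mul_nonneg hc h0, ?_⟩
  have h1 : ∑ j, ∑ i, f (x j i) ≤ ((q * t : ℕ) : ℝ) := by
    calc ∑ j, ∑ i, f (x j i) ≤ ∑ _j : Fin q, ∑ _i : Fin t, (1:ℝ) :=
          Finset.sum_le_sum fun j _ => Finset.sum_le_sum fun i _ => by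
            rcases hf (x j i) with h|h <;> simp [h]
      _ = ((q * t : ℕ) : ℝ) := by simp [mul_comm]
  rcases eq_or_ne ((q * t : ℕ) : ℝ) 0 with h|h
  · simp [h]
  · rw [one_div]
    calc (((q * t : ℕ) : ℝ))⁻¹ * ∑ j, ∑ i, f (x j i)
        ≤ (((q * t : ℕ) : ℝ))⁻¹ * ((q * t : ℕ) : ℝ) :=
          mul_le_mul_of_nonneg_left h1 (inv_nonneg.mpr (Nat.cast_nonneg _))
      _ = 1 := inv_mul_cancel₀ h

lemma comp_bound {α : Type*} [Fintype α] [DecidableEq α] (k : ℕ) {q t : ℕ} (f : Finset α → ℝ)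
    (hf : ∀ S, f S = 0 ∨ f S = 1) (x : Fin q → Fin t → Finset α) :
    |Qk k Finset.univ f - (1 / ((q * t : ℕ) : ℝ)) * ∑ j, ∑ i, f (x j i)| ≤ 2 := by
  have hQ := Qk_bounds k (Finset.univ : Finset α) f hf
  have hE := est_bounds f hf x
  rw [abs_le]
  constructor <;> linarith [hQ.1, hQ.2, hE.1, hE.2]

lemma sup_bdd {α : Type*} [Fintype α] [DecidableEq α] (k : ℕ) {q t : ℕ}
    (H : Set (Finset α → ℝ)) (hbool : ∀ f ∈ H, ∀ S : Finset α, f S = 0 ∨ f S = 1)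
    (x : Fin q → Fin t → Finset α) :
    BddAbove (Set.range fun f : H =>
      |Qk k Finset.univ f.1 - (1 / ((q * t : ℕ) : ℝ)) * ∑ j, ∑ i, f.1 (x j i)|) :=
  ⟨2, fun y hy => by
    obtain ⟨f, rfl⟩ := hy
    exact comp_bound k f.1 (hbool f.1 f.2) x⟩

set_option maxHeartbeats 800000 in
lemma avg_pi_inj {β α ι : Type*} [Fintype β] [DecidableEq β] [Fintype α] [DecidableEq α]
    [Fintype ι] [DecidableEq ι] (k : ℕ) (U : ι → Finset β) (C : Finset α)
    (hne : ∀ j, Nonempty {g : ↥(U j) → α // Function.Injective g ∧ ∀ x, g x ∈ C})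
    (j : ι) (J : Finset β) (hJU : J ⊆ U j) (hJk : J.card = k) (hkC : k ≤ C.card)
    (f : Finset α → ℝ) :
    (Fintype.card ((j' : ι) →
        {g : ↥(U j') → α // Function.Injective g ∧ ∀ x, g x ∈ C}) : ℝ)⁻¹ *
      ∑ g : (j' : ι) → {g : ↥(U j') → α // Function.Injective g ∧ ∀ x, g x ∈ C},
        f (J.attach.image fun x => (g j).1 ⟨x.1, hJU x.2⟩)
      = Qk k C f := by
  haveI := hne
  exact (avg_pi_eval (fun j' => {g : ↥(U j') → α // Function.Injective g ∧ ∀ x, g x ∈ C}) j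
      (fun g0 => f (J.attach.image fun x => g0.1 ⟨x.1, hJU x.2⟩))).trans
    (avg_inj_image k (U j) J hJU hJk C hkC (hne j) f)

/-! ### The main per-`q` inequality -/

set_option maxHeartbeats 1000000 in
lemma main_ineq {α : Type*} [Fintype α] [DecidableEq α] (k n : ℕ)
    (hk : 1 ≤ k) (hkn : k ≤ n) (hn : n ≤ Fintype.card α)
    (H : Set (Finset α → ℝ)) (hH : H.Nonempty)
    (hbool : ∀ f ∈ H, ∀ S : Finset α, f S = 0 ∨ f S = 1)
    (q : ℕ) (hq : 1 ≤ q) :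
    ((Fintype.card α).choose n : ℝ)⁻¹ *
        ∑ C ∈ (Finset.univ : Finset α).powersetCard n,
          (⨆ f : H, |Qk k Finset.univ f.1 - Qk k C f.1|) ≤
      pexp (sampleProcQ α k n (n / k) q hkn hn (Nat.div_mul_le_self n k))
        (fun x => ⨆ f : H, |Qk k Finset.univ f.1 -
          (1 / ((q * (n / k) : ℕ) : ℝ)) * ∑ j, ∑ i, f.1 (x.2 j i)|) := by
  haveI hHne : Nonempty ↥H := hH.to_subtype
  have ht1 : 1 ≤ n / k := (Nat.one_le_div_iff hk).mpr hkn
  haveI hC : Nonempty {C : Finset α // C.card = n} := by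
    obtain ⟨s, -, hs⟩ := Finset.exists_subset_card_eq
      (show n ≤ (Finset.univ : Finset α).card by simpa using hn)
    exact ⟨⟨s, hs⟩⟩
  haveI hI : Nonempty {I : Finset (Fin (Fintype.card α)) // I.card = k} := by
    obtain ⟨s, -, hs⟩ := Finset.exists_subset_card_eq
      (show k ≤ (Finset.univ : Finset (Fin (Fintype.card α))).card by
        simpa using (hkn.trans hn))
    exact ⟨⟨s, hs⟩⟩
  haveI hGne : ∀ (C : {C : Finset α // C.card = n})
      (I : Fin q → Fin (n / k) → {I : Finset (Fin (Fintype.card α)) // I.card = k}) (j : Fin q),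
      Nonempty {g : ↥(Finset.univ.biUnion fun i => (I j i).1) → α //
        Function.Injective g ∧ ∀ x, g x ∈ C.1} := by
    intro C I j
    have hU : (Finset.univ.biUnion fun i => (I j i).1).card ≤ n := by
      refine le_trans Finset.card_biUnion_le ?_
      calc ∑ i : Fin (n / k), (I j i).1.card = ∑ _i : Fin (n / k), k :=
            Finset.sum_congr rfl fun i _ => (I j i).2
        _ = (n / k) * k := by simp [Finset.sum_const, mul_comm]
        _ ≤ n := Nat.div_mul_le_self n k
    have hcard : Fintype.card ↥(Finset.univ.biUnion fun i => (I j i).1)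
        ≤ Fintype.card ↥C.1 := by
      rw [Fintype.card_coe, Fintype.card_coe]
      exact hU.trans_eq C.2.symm
    obtain ⟨e⟩ := Function.Embedding.nonempty_of_card_le hcard
    exact ⟨⟨fun x => (e x).1, fun a b hab => e.injective (Subtype.ext hab), fun x => (e x).2⟩⟩
  have hqt : ((q * (n / k) : ℕ) : ℝ) ≠ 0 := by
    have h : 0 < q * (n / k) := Nat.mul_pos hq ht1
    exact_mod_cast h.ne'
  have hPdef : sampleProcQ α k n (n / k) q hkn hn (Nat.div_mul_le_self n k) =
      (PMF.uniformOfFintype {C : Finset α // C.card = n}).bind fun C =>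
        (PMF.uniformOfFintype (Fin q → Fin (n / k) →
            {I : Finset (Fin (Fintype.card α)) // I.card = k})).bind fun I =>
          (PMF.uniformOfFintype ((j : Fin q) →
              {g : ↥(Finset.univ.biUnion fun i => (I j i).1) → α //
                Function.Injective g ∧ ∀ x, g x ∈ C.1})).map fun g =>
            (C.1, fun j i => (I j i).1.attach.image fun x =>
              (g j).1 ⟨x.1, Finset.mem_biUnion.mpr ⟨i, Finset.mem_univ i, x.2⟩⟩) := rfl
  have hinner : ∀ C : {C : Finset α // C.card = n},
      pexp ((PMF.uniformOfFintype (Fin q → Fin (n / k) →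
          {I : Finset (Fin (Fintype.card α)) // I.card = k})).bind fun I =>
        (PMF.uniformOfFintype ((j : Fin q) →
            {g : ↥(Finset.univ.biUnion fun i => (I j i).1) → α //
              Function.Injective g ∧ ∀ x, g x ∈ C.1})).map fun g =>
          (C.1, fun j i => (I j i).1.attach.image fun x =>
            (g j).1 ⟨x.1, Finset.mem_biUnion.mpr ⟨i, Finset.mem_univ i, x.2⟩⟩))
        (fun x => ⨆ f : H, |Qk k Finset.univ f.1 -
          (1 / ((q * (n / k) : ℕ) : ℝ)) * ∑ j, ∑ i, f.1 (x.2 j i)|)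
      = ∑ I : Fin q → Fin (n / k) → {I : Finset (Fin (Fintype.card α)) // I.card = k},
          (Fintype.card (Fin q → Fin (n / k) →
            {I : Finset (Fin (Fintype.card α)) // I.card = k}) : ℝ)⁻¹ *
          ∑ g : (j : Fin q) → {g : ↥(Finset.univ.biUnion fun i => (I j i).1) → α //
              Function.Injective g ∧ ∀ x, g x ∈ C.1},
            (Fintype.card ((j : Fin q) →
              {g : ↥(Finset.univ.biUnion fun i => (I j i).1) → α //
                Function.Injective g ∧ ∀ x, g x ∈ C.1}) : ℝ)⁻¹ *
            (⨆ f : H, |Qk k Finset.univ f.1 - (1 / ((q * (n / k) : ℕ) : ℝ)) *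
              ∑ j, ∑ i, f.1 ((I j i).1.attach.image fun x =>
                (g j).1 ⟨x.1, Finset.mem_biUnion.mpr ⟨i, Finset.mem_univ i, x.2⟩⟩)|) := by
    intro C
    rw [pexp_bind]
    refine Finset.sum_congr rfl fun I _ => ?_
    rw [toReal_uniform, pexp_map]
    congr 1
    refine Finset.sum_congr rfl fun g _ => ?_
    rw [toReal_uniform]
  have hlhs : ((Fintype.card α).choose n : ℝ)⁻¹ *
      ∑ C ∈ (Finset.univ : Finset α).powersetCard n,
        (⨆ f : H, |Qk k Finset.univ f.1 - Qk k C f.1|)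
      = ∑ C : {C : Finset α // C.card = n},
          (Fintype.card {C : Finset α // C.card = n} : ℝ)⁻¹ *
          (⨆ f : H, |Qk k Finset.univ f.1 - Qk k C.1 f.1|) := by
    rw [Finset.mul_sum, Finset.sum_subtype (F := inferInstance)
      (Finset.powersetCard n Finset.univ)
      (fun C => Finset.mem_powersetCard_univ)
      (fun C => (((Fintype.card α).choose n : ℝ))⁻¹ *
        ⨆ f : H, |Qk k Finset.univ f.1 - Qk k C f.1|)]
    simp [Fintype.card_finset_len]
  rw [hPdef, pexp_bind, hlhs]
  simp only [hinner, toReal_uniform]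
  refine Finset.sum_le_sum fun C _ => ?_
  refine mul_le_mul_of_nonneg_left ?_ (inv_nonneg.mpr (Nat.cast_nonneg _))
  refine ciSup_le fun f => ?_
  have hkC : k ≤ C.1.card := by rw [C.2]; exact hkn
  have havg : ∀ (I : Fin q → Fin (n / k) → {I : Finset (Fin (Fintype.card α)) // I.card = k})
      (j : Fin q) (i : Fin (n / k)),
      (Fintype.card ((j' : Fin q) →
        {g : ↥(Finset.univ.biUnion fun i' => (I j' i').1) → α //
          Function.Injective g ∧ ∀ x, g x ∈ C.1}) : ℝ)⁻¹ *
        ∑ g : (j' : Fin q) → {g : ↥(Finset.univ.biUnion fun i' => (I j' i').1) → α //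
            Function.Injective g ∧ ∀ x, g x ∈ C.1},
          f.1 ((I j i).1.attach.image fun x =>
            (g j).1 ⟨x.1, Finset.mem_biUnion.mpr ⟨i, Finset.mem_univ i, x.2⟩⟩)
      = Qk k C.1 f.1 := by
    intro I j i
    exact avg_pi_inj k (fun j' => Finset.univ.biUnion fun i' => (I j' i').1) C.1
      (hGne C I) j (I j i).1
      (fun x hx => Finset.mem_biUnion.mpr ⟨i, Finset.mem_univ i, hx⟩) (I j i).2 hkC f.1
  have hGsum : ∀ I : Fin q → Fin (n / k) → {I : Finset (Fin (Fintype.card α)) // I.card = k},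
      ∑ _g : (j : Fin q) → {g : ↥(Finset.univ.biUnion fun i => (I j i).1) → α //
          Function.Injective g ∧ ∀ x, g x ∈ C.1},
        (Fintype.card ((j : Fin q) → {g : ↥(Finset.univ.biUnion fun i => (I j i).1) → α //
          Function.Injective g ∧ ∀ x, g x ∈ C.1}) : ℝ)⁻¹ = 1 := by
    intro I
    rw [Finset.sum_const, Finset.card_univ, nsmul_eq_mul,
      mul_inv_cancel₀ (Nat.cast_ne_zero.mpr Fintype.card_ne_zero)]
  have hA : ∀ I : Fin q → Fin (n / k) → {I : Finset (Fin (Fintype.card α)) // I.card = k},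
      ∑ g : (j : Fin q) → {g : ↥(Finset.univ.biUnion fun i => (I j i).1) → α //
          Function.Injective g ∧ ∀ x, g x ∈ C.1},
        (Fintype.card ((j : Fin q) → {g : ↥(Finset.univ.biUnion fun i => (I j i).1) → α //
          Function.Injective g ∧ ∀ x, g x ∈ C.1}) : ℝ)⁻¹ *
        ((1 / ((q * (n / k) : ℕ) : ℝ)) * ∑ j, ∑ i, f.1 ((I j i).1.attach.image fun x =>
          (g j).1 ⟨x.1, Finset.mem_biUnion.mpr ⟨i, Finset.mem_univ i, x.2⟩⟩))
      = Qk k C.1 f.1 := by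
    intro I
    rw [← Finset.mul_sum, ← Finset.mul_sum]
    have hswap : ∑ g : (j : Fin q) → {g : ↥(Finset.univ.biUnion fun i => (I j i).1) → α //
          Function.Injective g ∧ ∀ x, g x ∈ C.1}, ∑ j, ∑ i,
            f.1 ((I j i).1.attach.image fun x =>
              (g j).1 ⟨x.1, Finset.mem_biUnion.mpr ⟨i, Finset.mem_univ i, x.2⟩⟩)
        = ∑ j, ∑ i, ∑ g : (j : Fin q) →
            {g : ↥(Finset.univ.biUnion fun i => (I j i).1) → α //
              Function.Injective g ∧ ∀ x, g x ∈ C.1},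
            f.1 ((I j i).1.attach.image fun x =>
              (g j).1 ⟨x.1, Finset.mem_biUnion.mpr ⟨i, Finset.mem_univ i, x.2⟩⟩) := by
      rw [Finset.sum_comm]
      exact Finset.sum_congr rfl fun j _ => Finset.sum_comm
    rw [hswap]
    calc (Fintype.card ((j : Fin q) →
          {g : ↥(Finset.univ.biUnion fun i => (I j i).1) → α //
            Function.Injective g ∧ ∀ x, g x ∈ C.1}) : ℝ)⁻¹ *
          ((1 / ((q * (n / k) : ℕ) : ℝ)) * ∑ j, ∑ i, ∑ g : (j : Fin q) →
            {g : ↥(Finset.univ.biUnion fun i => (I j i).1) → α //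
              Function.Injective g ∧ ∀ x, g x ∈ C.1},
            f.1 ((I j i).1.attach.image fun x =>
              (g j).1 ⟨x.1, Finset.mem_biUnion.mpr ⟨i, Finset.mem_univ i, x.2⟩⟩))
        = (1 / ((q * (n / k) : ℕ) : ℝ)) * ∑ j, ∑ i,
            ((Fintype.card ((j : Fin q) →
              {g : ↥(Finset.univ.biUnion fun i => (I j i).1) → α //
                Function.Injective g ∧ ∀ x, g x ∈ C.1}) : ℝ)⁻¹ *
            ∑ g : (j : Fin q) → {g : ↥(Finset.univ.biUnion fun i => (I j i).1) → α //
                Function.Injective g ∧ ∀ x, g x ∈ C.1},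
              f.1 ((I j i).1.attach.image fun x =>
                (g j).1 ⟨x.1, Finset.mem_biUnion.mpr ⟨i, Finset.mem_univ i, x.2⟩⟩)) := by
          simp only [Finset.mul_sum]
          exact Finset.sum_congr rfl fun j _ => Finset.sum_congr rfl fun i _ =>
            Finset.sum_congr rfl fun g _ => by ring
      _ = (1 / ((q * (n / k) : ℕ) : ℝ)) * ∑ _j : Fin q, ∑ _i : Fin (n / k), Qk k C.1 f.1 := by
          exact congrArg _ (Finset.sum_congr rfl fun j _ =>
            Finset.sum_congr rfl fun i _ => havg I j i)
      _ = Qk k C.1 f.1 := by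
          have hq0 : (q : ℝ) ≠ 0 := Nat.cast_ne_zero.mpr (by omega)
          have ht0 : ((n / k : ℕ) : ℝ) ≠ 0 := Nat.cast_ne_zero.mpr (by omega)
          simp only [Finset.sum_const, Finset.card_univ, Fintype.card_fin, nsmul_eq_mul]
          push_cast
          field_simp
  have hper : ∀ I : Fin q → Fin (n / k) → {I : Finset (Fin (Fintype.card α)) // I.card = k},
      ∑ g : (j : Fin q) → {g : ↥(Finset.univ.biUnion fun i => (I j i).1) → α //
          Function.Injective g ∧ ∀ x, g x ∈ C.1},
        (Fintype.card ((j : Fin q) → {g : ↥(Finset.univ.biUnion fun i => (I j i).1) → α //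
          Function.Injective g ∧ ∀ x, g x ∈ C.1}) : ℝ)⁻¹ *
        (Qk k Finset.univ f.1 - (1 / ((q * (n / k) : ℕ) : ℝ)) *
          ∑ j, ∑ i, f.1 ((I j i).1.attach.image fun x =>
            (g j).1 ⟨x.1, Finset.mem_biUnion.mpr ⟨i, Finset.mem_univ i, x.2⟩⟩))
      = Qk k Finset.univ f.1 - Qk k C.1 f.1 := by
    intro I
    simp only [mul_sub]
    rw [Finset.sum_sub_distrib, ← Finset.sum_mul, hGsum I, one_mul, hA I]
  have hIsum : ∑ _I : Fin q → Fin (n / k) → {I : Finset (Fin (Fintype.card α)) // I.card = k},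
      (Fintype.card (Fin q → Fin (n / k) →
        {I : Finset (Fin (Fintype.card α)) // I.card = k}) : ℝ)⁻¹ = 1 := by
    rw [Finset.sum_const, Finset.card_univ, nsmul_eq_mul,
      mul_inv_cancel₀ (Nat.cast_ne_zero.mpr Fintype.card_ne_zero)]
  have hsum1 : ∑ I : Fin q → Fin (n / k) → {I : Finset (Fin (Fintype.card α)) // I.card = k},
      (Fintype.card (Fin q → Fin (n / k) →
        {I : Finset (Fin (Fintype.card α)) // I.card = k}) : ℝ)⁻¹ *
      ∑ g : (j : Fin q) → {g : ↥(Finset.univ.biUnion fun i => (I j i).1) → α //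
          Function.Injective g ∧ ∀ x, g x ∈ C.1},
        (Fintype.card ((j : Fin q) → {g : ↥(Finset.univ.biUnion fun i => (I j i).1) → α //
          Function.Injective g ∧ ∀ x, g x ∈ C.1}) : ℝ)⁻¹ *
        (Qk k Finset.univ f.1 - (1 / ((q * (n / k) : ℕ) : ℝ)) *
          ∑ j, ∑ i, f.1 ((I j i).1.attach.image fun x =>
            (g j).1 ⟨x.1, Finset.mem_biUnion.mpr ⟨i, Finset.mem_univ i, x.2⟩⟩))
      = Qk k Finset.univ f.1 - Qk k C.1 f.1 := by
    rw [Finset.sum_congr rfl (fun I _ => by rw [hper I]), ← Finset.sum_mul, hIsum, one_mul]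
  calc |Qk k Finset.univ f.1 - Qk k C.1 f.1|
      = |∑ I : Fin q → Fin (n / k) → {I : Finset (Fin (Fintype.card α)) // I.card = k},
          (Fintype.card (Fin q → Fin (n / k) →
            {I : Finset (Fin (Fintype.card α)) // I.card = k}) : ℝ)⁻¹ *
          ∑ g : (j : Fin q) → {g : ↥(Finset.univ.biUnion fun i => (I j i).1) → α //
              Function.Injective g ∧ ∀ x, g x ∈ C.1},
            (Fintype.card ((j : Fin q) →
              {g : ↥(Finset.univ.biUnion fun i => (I j i).1) → α //
                Function.Injective g ∧ ∀ x, g x ∈ C.1}) : ℝ)⁻¹ *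
            (Qk k Finset.univ f.1 - (1 / ((q * (n / k) : ℕ) : ℝ)) *
              ∑ j, ∑ i, f.1 ((I j i).1.attach.image fun x =>
                (g j).1 ⟨x.1, Finset.mem_biUnion.mpr ⟨i, Finset.mem_univ i, x.2⟩⟩))| := by
        rw [hsum1]
    _ ≤ ∑ I : Fin q → Fin (n / k) → {I : Finset (Fin (Fintype.card α)) // I.card = k},
          (Fintype.card (Fin q → Fin (n / k) →
            {I : Finset (Fin (Fintype.card α)) // I.card = k}) : ℝ)⁻¹ *
          ∑ g : (j : Fin q) → {g : ↥(Finset.univ.biUnion fun i => (I j i).1) → α //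
              Function.Injective g ∧ ∀ x, g x ∈ C.1},
            (Fintype.card ((j : Fin q) →
              {g : ↥(Finset.univ.biUnion fun i => (I j i).1) → α //
                Function.Injective g ∧ ∀ x, g x ∈ C.1}) : ℝ)⁻¹ *
            (⨆ f' : H, |Qk k Finset.univ f'.1 - (1 / ((q * (n / k) : ℕ) : ℝ)) *
              ∑ j, ∑ i, f'.1 ((I j i).1.attach.image fun x =>
                (g j).1 ⟨x.1, Finset.mem_biUnion.mpr ⟨i, Finset.mem_univ i, x.2⟩⟩)|) := by
        refine abs_avg_le _ _ _ _ (fun I _ => inv_nonneg.mpr (Nat.cast_nonneg _))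
          (fun I _ => ?_)
        refine abs_avg_le _ _ _ _ (fun g _ => inv_nonneg.mpr (Nat.cast_nonneg _))
          (fun g _ => ?_)
        exact le_ciSup (sup_bdd k H hbool _) f

/-- Lemma 2 of the paper. -/
theorem stmt15 {α : Type*} [Fintype α] [DecidableEq α] (N k n : ℕ)
    (hN : Fintype.card α = N) (hk : 1 ≤ k) (hkn : k ≤ n) (hn : n ≤ Fintype.card α)
    (H : Set (Finset α → ℝ)) (hH : H.Nonempty)
    (hbool : ∀ f ∈ H, ∀ S : Finset α, f S = 0 ∨ f S = 1)
    (hVC : ∃ d : ℕ, VCDimEq k H d) :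
    (N.choose n : ℝ)⁻¹ *
        ∑ C ∈ (Finset.univ : Finset α).powersetCard n,
          (⨆ f : H, |Qk k Finset.univ f.1 - Qk k C f.1|) ≤
      Filter.limsup
        (fun q : ℕ =>
          ∑' x : Finset α × (Fin q → Fin (n / k) → Finset α),
            ((sampleProcQ α k n (n / k) q hkn hn (Nat.div_mul_le_self n k)) x).toReal *
              (⨆ f : H, |Qk k Finset.univ f.1 -
                (1 / ((q * (n / k) : ℕ) : ℝ)) * ∑ j, ∑ i, f.1 (x.2 j i)|))
        Filter.atTop := by
  haveI hHne : Nonempty ↥H := hH.to_subtype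
  subst hN
  refine Filter.le_limsup_of_frequently_le ?_ ?_
  · exact (Filter.eventually_atTop.mpr ⟨1, fun q hq =>
      main_ineq k n hk hkn hn H hH hbool q hq⟩).frequently
  · refine Filter.isBoundedUnder_of ⟨2, fun q => ?_⟩
    have h1 : ∀ x : Finset α × (Fin q → Fin (n / k) → Finset α),
        (⨆ f : H, |Qk k Finset.univ f.1 -
          (1 / ((q * (n / k) : ℕ) : ℝ)) * ∑ j, ∑ i, f.1 (x.2 j i)|) ≤ 2 :=
      fun x => ciSup_le fun f => comp_bound k f.1 (hbool f.1 f.2) x.2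
    calc (∑' x : Finset α × (Fin q → Fin (n / k) → Finset α),
          ((sampleProcQ α k n (n / k) q hkn hn (Nat.div_mul_le_self n k)) x).toReal *
          (⨆ f : H, |Qk k Finset.univ f.1 -
            (1 / ((q * (n / k) : ℕ) : ℝ)) * ∑ j, ∑ i, f.1 (x.2 j i)|))
        = ∑ x : Finset α × (Fin q → Fin (n / k) → Finset α),
            ((sampleProcQ α k n (n / k) q hkn hn (Nat.div_mul_le_self n k)) x).toReal *
            (⨆ f : H, |Qk k Finset.univ f.1 -
              (1 / ((q * (n / k) : ℕ) : ℝ)) * ∑ j, ∑ i, f.1 (x.2 j i)|) := tsum_fintype _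
      _ ≤ ∑ x : Finset α × (Fin q → Fin (n / k) → Finset α),
            ((sampleProcQ α k n (n / k) q hkn hn (Nat.div_mul_le_self n k)) x).toReal * 2 :=
          Finset.sum_le_sum fun x _ =>
            mul_le_mul_of_nonneg_left (h1 x) ENNReal.toReal_nonneg
      _ = 2 := by rw [← Finset.sum_mul, sum_toReal_pmf, one_mul]
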